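/- For 0 < r < 1, the quartic P_r(x) = a x⁴ + b x² + c with a = -1/(2r(r+1)²), b = (3r²+2r+1)/(2r(r+1)²), c = r²(2r+1)/(2r(r+1)²) satisfies: P_r(x) = x for x ∈ [0,1] if and only if x = r or x = 1. -/

import Mathlib

theorem stmt_5 (r : ℝ) (hr : 0 < r) (hr1 : r < 1)
    (a b c : ℝ)
    (ha : a = -1 / (2 * r * (r + 1) ^ 2))
    (hb : b = (3 * r ^ 2 + 2 * r + 1) / (2 * r * (r + 1) ^ 2))
    (hc : c = r ^ 2 * (2 * r + 1) / (2 * r * (r + 1) ^ 2)) :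
    ∀ x ∈ Set.Icc (0 : ℝ) 1,
      (a * x ^ 4 + b * x ^ 2 + c = x ↔ x = r ∨ x = 1) := by
  have hd : 2 * r * (r + 1) ^ 2 ≠ 0 := by positivity
  subst ha hb hc
  rintro x ⟨hx0, hx1⟩
  constructor
  · intro h
    have key : -((x - 1) * (x - r) ^ 2 * (x + 2 * r + 1)) = 0 := by
      field_simp at h
      have key0 : -((x - 1) * (x - r) ^ 2 * (x + 2 * r + 1)) * (2 * r * (r + 1) ^ 2) ^ 2 = 0 := by
        linear_combination (2 * r * (r + 1) ^ 2) ^ 2 * h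
      have hd2 : (2 * r * (r + 1) ^ 2) ^ 2 ≠ 0 := pow_ne_zero _ hd
      exact (mul_eq_zero.1 key0).resolve_right hd2
    have key2 : (x - 1) * ((x - r) ^ 2 * (x + 2 * r + 1)) = 0 := by linarith [key]
    rcases mul_eq_zero.1 key2 with h1 | h2
    · right; linarith
    rcases mul_eq_zero.1 h2 with h3 | h4
    · left
      have := pow_eq_zero_iff (n := 2) (by norm_num) |>.1 h3
      linarith
    · exfalso; nlinarith
  · rintro (rfl | rfl) <;> field_simp <;> ring
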